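/- If ψ : [x₀, x₁] → ℝ is C² with ψ ≥ 0, ψ''(x) ≥ (μ²/(nε²)) ψ(x) on (x₀, x₁), ψ(x₀) = ψ₀ ≥ 0, and ψ'(x₁) = 0, then ψ(x₁) ≤ ψ₀ / cosh( (μ/(√n ε)) (x₁ - x₀) ). -/

import Mathlib

open Set

/-- Comparison with the `cosh` barrier: the maximum-principle step of the lower bound. -/
theorem cosh_comparison
    (ψ ψ' ψ'' : ℝ → ℝ) (x₀ x₁ μ ε n ψ₀ : ℝ)
    (hx : x₀ < x₁) (hμ : 0 < μ) (hε : 0 < ε) (hn : 1 ≤ n)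
    (hd1 : ∀ x ∈ Icc x₀ x₁, HasDerivAt ψ (ψ' x) x)
    (hd2 : ∀ x ∈ Icc x₀ x₁, HasDerivAt ψ' (ψ'' x) x)
    (hcont : ContinuousOn ψ'' (Icc x₀ x₁))
    (hpos : ∀ x ∈ Icc x₀ x₁, 0 ≤ ψ x)
    (hineq : ∀ x ∈ Ioo x₀ x₁, μ ^ 2 / (n * ε ^ 2) * ψ x ≤ ψ'' x)
    (h0 : ψ x₀ = ψ₀) (hψ₀ : 0 ≤ ψ₀) (h1 : ψ' x₁ = 0) :
    ψ x₁ ≤ ψ₀ / Real.cosh (μ / (Real.sqrt n * ε) * (x₁ - x₀)) := by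
  set k := μ / (Real.sqrt n * ε) with hkdef
  have hn0 : (0:ℝ) < n := by linarith
  have hsn : 0 < Real.sqrt n := Real.sqrt_pos.mpr hn0
  have hk : 0 < k := div_pos hμ (mul_pos hsn hε)
  have hk2 : k ^ 2 = μ ^ 2 / (n * ε ^ 2) := by
    rw [hkdef, div_pow, mul_pow, Real.sq_sqrt hn0.le]
  set φ : ℝ → ℝ := fun x => Real.cosh (k * (x₁ - x)) with hφdef
  set φ' : ℝ → ℝ := fun x => -(k * Real.sinh (k * (x₁ - x))) with hφ'def
  have hin : ∀ x : ℝ, HasDerivAt (fun y => k * (x₁ - y)) (-k) x := by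
    intro x
    simpa using ((hasDerivAt_id x).const_sub x₁).const_mul k
  have hφd : ∀ x : ℝ, HasDerivAt φ (φ' x) x := by
    intro x
    have h2 : Real.sinh (k * (x₁ - x)) * (-k) = φ' x := by rw [hφ'def]; ring
    exact h2 ▸ (hin x).cosh
  have hφ'd : ∀ x : ℝ, HasDerivAt φ' (k ^ 2 * φ x) x := by
    intro x
    have := ((hin x).sinh.const_mul k).neg
    refine this.congr_deriv ?_
    simp [hφdef]; ring
  have hφpos : ∀ x : ℝ, 0 < φ x := by intro x; exact Real.cosh_pos _
  set h : ℝ → ℝ := fun x => ψ' x * φ x - ψ x * φ' x with hhdef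
  have hhd : ∀ x ∈ Icc x₀ x₁,
      HasDerivAt h ((ψ'' x - k ^ 2 * ψ x) * φ x) x := by
    intro x hxm
    have := ((hd2 x hxm).mul (hφd x)).sub ((hd1 x hxm).mul (hφ'd x))
    refine this.congr_deriv ?_
    ring
  have hmono : MonotoneOn h (Icc x₀ x₁) := by
    apply monotoneOn_of_deriv_nonneg (convex_Icc _ _)
    · exact fun x hxm => (hhd x hxm).continuousAt.continuousWithinAt
    · rw [interior_Icc]
      exact fun x hxm =>
        (hhd x (Ioo_subset_Icc_self hxm)).differentiableAt.differentiableWithinAt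
    · rw [interior_Icc]
      intro x hxm
      rw [(hhd x (Ioo_subset_Icc_self hxm)).deriv]
      have h1' : k ^ 2 * ψ x ≤ ψ'' x := by
        rw [hk2]; exact hineq x hxm
      exact mul_nonneg (by linarith) (hφpos x).le
  have hh1 : h x₁ = 0 := by
    simp [hhdef, hφ'def, h1]
  have hhle : ∀ x ∈ Icc x₀ x₁, h x ≤ 0 := by
    intro x hxm
    have := hmono hxm (right_mem_Icc.mpr hx.le) hxm.2
    linarith [hh1 ▸ this]
  set g : ℝ → ℝ := fun x => ψ x / φ x with hgdef
  have hgd : ∀ x ∈ Icc x₀ x₁, HasDerivAt g (h x / (φ x) ^ 2) x := by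
    intro x hxm
    exact (hd1 x hxm).div (hφd x) (hφpos x).ne'
  have hanti : AntitoneOn g (Icc x₀ x₁) := by
    apply antitoneOn_of_deriv_nonpos (convex_Icc _ _)
    · exact fun x hxm => (hgd x hxm).continuousAt.continuousWithinAt
    · rw [interior_Icc]
      exact fun x hxm =>
        (hgd x (Ioo_subset_Icc_self hxm)).differentiableAt.differentiableWithinAt
    · rw [interior_Icc]
      intro x hxm
      rw [(hgd x (Ioo_subset_Icc_self hxm)).deriv]
      exact div_nonpos_of_nonpos_of_nonneg (hhle x (Ioo_subset_Icc_self hxm))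
        (sq_nonneg _)
  have key : g x₁ ≤ g x₀ :=
    hanti (left_mem_Icc.mpr hx.le) (right_mem_Icc.mpr hx.le) hx.le
  have hg1 : g x₁ = ψ x₁ := by simp [hgdef, hφdef]
  have hg0 : g x₀ = ψ₀ / Real.cosh (k * (x₁ - x₀)) := by
    simp [hgdef, hφdef, h0]
  rw [hg1, hg0] at key
  exact key
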